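/- Let G = (V,E) be a connected graph with n nodes, let A be an n×n real matrix with A_{ij} = 0 for j ∉ N(i) (with N(i) the closed neighborhood of i) and with each row summing to zero (Σ_j A_{lj} = 0 for all l), with every node of degree d_l ≥ 1. Let D be the diagonal matrix with D_{ll} = d_l + 1 and M the diagonal matrix with M_{ii} = Σ_l A_{li}². Then the symmetric matrix M − AᵀD⁻¹A is positive semidefinite. -/

import Mathlib

open Matrix

theorem stmt4 (n : ℕ) (G : SimpleGraph (Fin n)) [DecidableRel G.Adj]
    (hconn : G.Connected)
    (A : Matrix (Fin n) (Fin n) ℝ)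
    (hsupp : ∀ i j, ¬ (G.Adj i j ∨ i = j) → A i j = 0)
    (hrow : ∀ l, ∑ j, A l j = 0)
    (hdeg : ∀ l, 1 ≤ G.degree l) :
    (Matrix.diagonal (fun i => ∑ l, (A l i) ^ 2) -
      Aᵀ * Matrix.diagonal (fun l => ((G.degree l : ℝ) + 1)⁻¹) * A).PosSemidef := by
  rw [Matrix.posSemidef_iff_dotProduct_mulVec]
  constructor
  · -- Hermitian
    have h1 : (Matrix.diagonal (fun i => ∑ l, (A l i) ^ 2) : Matrix (Fin n) (Fin n) ℝ).IsHermitian :=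
      Matrix.isHermitian_diagonal _
    have h2 : (Aᵀ * Matrix.diagonal (fun l => ((G.degree l : ℝ) + 1)⁻¹) * A).IsHermitian := by
      have hAc : (Aᵀ : Matrix (Fin n) (Fin n) ℝ) = Aᴴ := by
        ext i j; simp [Matrix.conjTranspose_apply]
      rw [hAc]
      exact Matrix.isHermitian_conjTranspose_mul_mul A (Matrix.isHermitian_diagonal _)
    exact h1.sub h2
  · intro x
    set y : Fin n → ℝ := A *ᵥ x with hy
    have key : dotProduct (star x)
        ((Matrix.diagonal (fun i => ∑ l, (A l i) ^ 2) -
          Aᵀ * Matrix.diagonal (fun l => ((G.degree l : ℝ) + 1)⁻¹) * A) *ᵥ x)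
        = (∑ l, ∑ i, (A l i * x i) ^ 2) - ∑ l, ((G.degree l : ℝ) + 1)⁻¹ * (y l) ^ 2 := by
      rw [Matrix.sub_mulVec, dotProduct_sub]
      congr 1
      · simp only [star_trivial, dotProduct, Matrix.mulVec_diagonal]
        rw [Finset.sum_comm]
        refine Finset.sum_congr rfl fun l _ => ?_
        rw [Finset.sum_mul, Finset.mul_sum]
        refine Finset.sum_congr rfl fun i _ => ?_
        ring
      · rw [← Matrix.mulVec_mulVec, ← Matrix.mulVec_mulVec, star_trivial,
          dotProduct_mulVec, Matrix.vecMul_transpose, ← hy]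
        simp only [dotProduct, Matrix.mulVec_diagonal]
        refine Finset.sum_congr rfl fun l _ => ?_
        ring
    rw [key, sub_nonneg]
    refine Finset.sum_le_sum fun l _ => ?_
    have hdl : (0:ℝ) < (G.degree l : ℝ) + 1 := by positivity
    rw [inv_mul_le_iff₀ hdl]
    -- Cauchy-Schwarz on the closed neighborhood
    set S : Finset (Fin n) := insert l (G.neighborFinset l) with hS
    have hcard : (S.card : ℝ) = (G.degree l : ℝ) + 1 := by
      rw [hS, Finset.card_insert_of_notMem (by simp)]
      push_cast [SimpleGraph.card_neighborFinset_eq_degree]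
      ring
    have hyl : y l = ∑ i ∈ S, A l i * x i := by
      rw [hy, Matrix.mulVec, dotProduct]
      refine (Finset.sum_subset (Finset.subset_univ S) fun i _ hi => ?_).symm
      have : A l i = 0 := by
        apply hsupp
        rintro (h | h)
        · exact hi (by simp [hS, SimpleGraph.mem_neighborFinset, h])
        · exact hi (by simp [hS, h])
      simp [this]
    calc (y l) ^ 2 = (∑ i ∈ S, A l i * x i) ^ 2 := by rw [hyl]
      _ ≤ (S.card : ℝ) * ∑ i ∈ S, (A l i * x i) ^ 2 :=
          sq_sum_le_card_mul_sum_sq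
      _ ≤ ((G.degree l : ℝ) + 1) * ∑ i, (A l i * x i) ^ 2 := by
          rw [hcard]
          refine mul_le_mul_of_nonneg_left ?_ (le_of_lt hdl)
          exact Finset.sum_le_sum_of_subset_of_nonneg (Finset.subset_univ S)
            (fun i _ _ => sq_nonneg _)
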